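/- Let σ > 0 and μ ∈ ℝ be constants. For every t > 0 there exists a constant c > 0 such that for all m ≥ m₀ and all grid points x, y of A_m (regarded as grid points of A_{m+1} via the index map i ↦ 2i), the semidiscrete kernels at consecutive resolutions satisfy |u_m(x, y; t) − u_{m+1}(x, y; t)| ≤ c·h_m². -/

import Mathlib

/-- Grid step `h_m = L·2^{-m}`. -/
noncomputable def hstep (L : ℝ) (m : ℕ) : ℝ := L / 2 ^ m

/-- Real position of the `i`-th grid point of `A_m`: `x_i = -L + i·h_m`. -/
noncomputable def gridPos (L : ℝ) (m : ℕ) (i : ZMod (2 ^ (m + 1))) : ℝ :=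
  -L + (i.val : ℝ) * hstep L m

/-- The discrete generator `𝓛^m`: tridiagonal (periodic) matrix with
`𝓛^m(x, x±h_m) = σ(x)²/(2h_m²) ± μ(x)/(2h_m)`, `𝓛^m(x,x) = -σ(x)²/h_m²`, `0` otherwise. -/
noncomputable def gen (L : ℝ) (σ μ : ℝ → ℝ) (m : ℕ) :
    Matrix (ZMod (2 ^ (m + 1))) (ZMod (2 ^ (m + 1))) ℝ :=
  fun x y =>
    (if y = x + 1 then
        (σ (gridPos L m x)) ^ 2 / (2 * hstep L m ^ 2) + μ (gridPos L m x) / (2 * hstep L m)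
      else 0)
    + (if y = x - 1 then
        (σ (gridPos L m x)) ^ 2 / (2 * hstep L m ^ 2) - μ (gridPos L m x) / (2 * hstep L m)
      else 0)
    + (if y = x then -(σ (gridPos L m x)) ^ 2 / hstep L m ^ 2 else 0)

/-- The semidiscrete kernel `u_m(x, y; t) = h_m⁻¹·(exp(t·𝓛^m))(x, y)`. -/
noncomputable def kernel (L : ℝ) (σ μ : ℝ → ℝ) (m : ℕ) (t : ℝ)
    (x y : ZMod (2 ^ (m + 1))) : ℝ :=
  (hstep L m)⁻¹ * NormedSpace.exp (t • gen L σ μ m) x y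

/-- The time derivative of the semidiscrete kernel,
`∂_t u_m(x, y; t) = h_m⁻¹·(𝓛^m · exp(t·𝓛^m))(x, y)`. -/
noncomputable def dtKernel (L : ℝ) (σ μ : ℝ → ℝ) (m : ℕ) (t : ℝ)
    (x y : ZMod (2 ^ (m + 1))) : ℝ :=
  (hstep L m)⁻¹ * (gen L σ μ m * NormedSpace.exp (t • gen L σ μ m)) x y

/-- The index map regarding a grid point of `A_m` as a grid point of `A_{m'}`:
`i ↦ 2^{m'-m}·i`. -/
def embed (m m' : ℕ) (x : ZMod (2 ^ (m + 1))) : ZMod (2 ^ (m' + 1)) :=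
  ((2 ^ (m' - m) * x.val : ℕ) : ZMod (2 ^ (m' + 1)))

/-- The periodic distance `d(x,y) = min_{n∈ℤ} |x - y - 2Ln|`. -/
noncomputable def dPer (L x y : ℝ) : ℝ := ⨅ n : ℤ, |x - y - 2 * L * (n : ℝ)|


set_option maxHeartbeats 1000000

open Finset

noncomputable section KernelConvAux



def eC (n : ℕ) (j : ℤ) : ℂ := Complex.exp ((2 * Real.pi * j / n : ℝ) * Complex.I)

lemma eC_add (n : ℕ) (j j' : ℤ) : eC n (j + j') = eC n j * eC n j' := by
  rw [eC, eC, eC, ← Complex.exp_add]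
  congr 1
  push_cast
  ring

lemma eC_zero (n : ℕ) : eC n 0 = 1 := by
  simp [eC]

lemma eC_norm (n : ℕ) (j : ℤ) : ‖eC n j‖ = 1 := by
  rw [eC, Complex.norm_exp_ofReal_mul_I]

lemma eC_nmul (n : ℕ) (hn : (n:ℝ) ≠ 0) (s : ℤ) : eC n (n * s) = 1 := by
  have hnC : (n:ℂ) ≠ 0 := by exact_mod_cast Complex.ofReal_ne_zero.mpr hn
  have : eC n ((n:ℤ) * s) = Complex.exp ((s:ℂ) * (2 * Real.pi * Complex.I)) := by
    unfold eC
    congr 1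
    push_cast
    field_simp
  rw [this, Complex.exp_int_mul_two_pi_mul_I]

lemma eC_dvd_congr (n : ℕ) (hn : (n:ℝ) ≠ 0) {j j' : ℤ} (h : (n:ℤ) ∣ j - j') :
    eC n j = eC n j' := by
  obtain ⟨s, hs⟩ := h
  have : j = j' + (n:ℤ) * s := by linarith
  rw [this, eC_add, eC_nmul n hn, mul_one]

lemma eC_pow (n : ℕ) (D : ℤ) (k : ℕ) : eC n D ^ k = eC n (k * D) := by
  rw [eC, eC, ← Complex.exp_nat_mul]
  congr 1
  push_cast
  ring

lemma eC_double (n : ℕ) (hn : (n:ℝ) ≠ 0) (j : ℤ) : eC (2*n) (2*j) = eC n j := by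
  have hnC : (n:ℂ) ≠ 0 := by exact_mod_cast Complex.ofReal_ne_zero.mpr hn
  rw [eC, eC]
  congr 2
  push_cast
  field_simp

lemma eC_orth (n : ℕ) (hn : 0 < n) (D : ℤ) :
    ∑ k ∈ range n, eC n (k * D) = if ((n:ℤ) ∣ D) then (n:ℂ) else 0 := by
  have hnR : (n:ℝ) ≠ 0 := Nat.cast_ne_zero.mpr hn.ne'
  by_cases hdvd : (n:ℤ) ∣ D
  · rw [if_pos hdvd]
    obtain ⟨s, rfl⟩ := hdvd
    have : ∀ k ∈ range n, eC n (k * ((n:ℤ)*s)) = 1 := by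
      intro k _
      have h1 : (k:ℤ) * ((n:ℤ)*s) = (n:ℤ) * (k*s) := by ring
      rw [h1, eC_nmul n hnR]
    rw [Finset.sum_congr rfl this]
    simp
  · rw [if_neg hdvd]
    have hz : eC n D ≠ 1 := by
      intro h
      apply hdvd
      rw [eC, Complex.exp_eq_one_iff] at h
      obtain ⟨s, hs⟩ := h
      have him : (2 * Real.pi * D / n : ℝ) = (s:ℝ) * (2 * Real.pi) := by
        simpa using congrArg Complex.im hs
      have hr : (D:ℝ) = (n:ℝ) * s := by
        have h3 : (2*Real.pi) * (D:ℝ) = (2*Real.pi) * ((n:ℝ)*s) := by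
          have hd : (2 * Real.pi * D : ℝ) = (s:ℝ) * (2*Real.pi) * n := by
            field_simp at him
            linear_combination (2*Real.pi) * him
          linear_combination hd
        exact mul_left_cancel₀ (by positivity) h3
      exact ⟨s, by exact_mod_cast hr⟩
    have hterm : ∀ k ∈ range n, eC n ((k:ℤ) * D) = eC n D ^ k := by
      intro k _; rw [eC_pow]
    rw [Finset.sum_congr rfl hterm, geom_sum_eq hz]
    have hh : eC n D ^ n = 1 := by
      rw [eC_pow]
      have h1 : ((n:ℕ):ℤ) * D = (n:ℤ) * D := rfl
      rw [h1, eC_nmul n hnR]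
    rw [hh, sub_self, zero_div]





-- ### Taylor-type bounds

lemma my_sin_le {x : ℝ} (hx : 0 ≤ x) : Real.sin x ≤ x := by
  rcases eq_or_lt_of_le hx with h | h
  · simp [← h]
  · exact (Real.sin_lt h).le

lemma my_sin_lb {x : ℝ} (hx : 0 ≤ x) : x - x^3/6 ≤ Real.sin x := by
  have key : MonotoneOn (fun y : ℝ => Real.sin y - (y - y^3/6)) (Set.Ici 0) := by
    apply monotoneOn_of_deriv_nonneg (convex_Ici 0)
    · fun_prop
    · intro y _
      apply DifferentiableAt.differentiableWithinAt
      fun_prop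
    · intro y hy
      rw [interior_Ici] at hy
      have hd : HasDerivAt (fun y : ℝ => Real.sin y - (y - y^3/6))
          (Real.cos y - (1 - y^2/2)) y := by
        have h1 : HasDerivAt (fun y : ℝ => y - y^3/6) (1 - 3*y^2/6) y := by
          simpa [Pi.sub_def] using (hasDerivAt_id y).sub ((hasDerivAt_pow 3 y).div_const 6)
        have := (Real.hasDerivAt_sin y).sub h1
        exact this.congr_deriv (by ring)
      rw [hd.deriv]
      have := Real.one_sub_sq_div_two_le_cos (x := y)
      linarith
  have h0 := key Set.self_mem_Ici (Set.mem_Ici.mpr hx) hx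
  simp only [Real.sin_zero] at h0
  norm_num at h0
  linarith

lemma my_cos_ub {x : ℝ} (hx : 0 ≤ x) : Real.cos x ≤ 1 - x^2/2 + x^4/24 := by
  have key : MonotoneOn (fun y : ℝ => (1 - y^2/2 + y^4/24) - Real.cos y) (Set.Ici 0) := by
    apply monotoneOn_of_deriv_nonneg (convex_Ici 0)
    · fun_prop
    · intro y _
      apply DifferentiableAt.differentiableWithinAt
      fun_prop
    · intro y hy
      rw [interior_Ici] at hy
      have hd : HasDerivAt (fun y : ℝ => (1 - y^2/2 + y^4/24) - Real.cos y)
          (Real.sin y - (y - y^3/6)) y := by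
        have h1 : HasDerivAt (fun y : ℝ => 1 - y^2/2 + y^4/24) (-y + 4*y^3/24) y := by
          simpa [Pi.add_def] using (((hasDerivAt_pow 2 y).div_const 2).const_sub 1).add
            ((hasDerivAt_pow 4 y).div_const 24)
        have := h1.sub (Real.hasDerivAt_cos y)
        exact this.congr_deriv (by ring)
      rw [hd.deriv]
      have := my_sin_lb (le_of_lt hy)
      linarith
  have h0 := key Set.self_mem_Ici (Set.mem_Ici.mpr hx) hx
  simp only [Real.cos_zero] at h0
  norm_num at h0
  linarith

lemma abs_sin_taylor (x : ℝ) : |Real.sin x - x| ≤ |x|^3/6 := by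
  rcases le_or_gt 0 x with hx | hx
  · rw [abs_of_nonneg hx, abs_le]
    constructor
    · have := my_sin_lb hx; linarith
    · have h1 := my_sin_le hx
      have h3 : 0 ≤ x^3/6 := by positivity
      linarith
  · have hx' : 0 ≤ -x := by linarith
    rw [abs_of_nonpos hx.le]
    have h1 := my_sin_lb hx'
    have h2 := my_sin_le hx'
    rw [Real.sin_neg] at h1 h2
    rw [abs_le]
    constructor <;> nlinarith
  
lemma abs_cos_taylor (x : ℝ) : |Real.cos x - (1 - x^2/2)| ≤ x^4/24 := by
  have key : ∀ y : ℝ, 0 ≤ y → |Real.cos y - (1 - y^2/2)| ≤ y^4/24 := by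
    intro y hy
    rw [abs_le]
    constructor
    · have := Real.one_sub_sq_div_two_le_cos (x := y)
      have h3 : 0 ≤ y^4/24 := by positivity
      linarith
    · have := my_cos_ub hy
      linarith
  rcases le_or_gt 0 x with hx | hx
  · exact key x hx
  · have := key (-x) (by linarith)
    rw [Real.cos_neg, show ((-x)^2 : ℝ) = x^2 from by ring,
      show ((-x)^4 : ℝ) = x^4 from by ring] at this
    exact this

-- ### exponential bounds

lemma exp_neg_le_cube {z : ℝ} (hz : 0 < z) : Real.exp (-z) ≤ 27 / z^3 := by
  have h1 : z/3 ≤ Real.exp (z/3) := by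
    have := Real.add_one_le_exp (z/3)
    linarith
  have h2 : (z/3)^3 ≤ (Real.exp (z/3))^3 := by
    apply pow_le_pow_left₀ (by positivity) h1
  have h3 : (Real.exp (z/3))^3 = Real.exp z := by
    rw [← Real.exp_nat_mul]
    congr 1
    push_cast
    ring
  have h4 : z^3/27 ≤ Real.exp z := by
    rw [← h3]
    convert h2 using 1
    ring
  rw [Real.exp_neg]
  rw [inv_eq_one_div, div_le_div_iff₀ (Real.exp_pos z) (by positivity)]
  nlinarith [Real.exp_pos z]

lemma norm_cexp_sub_cexp (z w : ℂ) :
    ‖Complex.exp z - Complex.exp w‖ ≤ Real.exp (max z.re w.re) * ‖z - w‖ := by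
  set M := max z.re w.re with hM
  set s : Set ℂ := {v : ℂ | v.re ≤ M} with hsdef
  have hconv : Convex ℝ s := convex_halfSpace_re_le M
  have hder : ∀ v ∈ s, HasFDerivWithinAt Complex.exp
      (((1 : ℂ →L[ℂ] ℂ).smulRight (Complex.exp v)).restrictScalars ℝ) s v := by
    intro v _
    exact ((Complex.hasDerivAt_exp v).hasFDerivAt.restrictScalars ℝ).hasFDerivWithinAt
  have hbound : ∀ v ∈ s, ‖((1 : ℂ →L[ℂ] ℂ).smulRight (Complex.exp v)).restrictScalars ℝ‖
      ≤ Real.exp M := by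
    intro v hv
    rw [ContinuousLinearMap.norm_restrictScalars, ContinuousLinearMap.norm_smulRight_apply,
      ContinuousLinearMap.one_def, ContinuousLinearMap.norm_id, one_mul,
      Complex.norm_exp]
    exact Real.exp_le_exp.mpr hv
  have hz : z ∈ s := by
    simp only [hsdef, Set.mem_setOf_eq]; exact le_max_left _ _
  have hw : w ∈ s := by
    simp only [hsdef, Set.mem_setOf_eq]; exact le_max_right _ _
  exact hconv.norm_image_sub_le_of_norm_hasFDerivWithin_le hder hbound hw hz

-- ### inverse square sums

def invsq (k : ℕ) : ℝ := if k = 0 then 0 else 1/(k:ℝ)^2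

lemma invsq_nonneg (k : ℕ) : 0 ≤ invsq k := by
  unfold invsq; split <;> positivity

lemma sum_invsq_le : ∀ M : ℕ, ∑ k ∈ range M, invsq k ≤ 2 := by
  have key : ∀ M : ℕ, 1 ≤ M → ∑ k ∈ range (M+1), invsq k ≤ 2 - 1/(M:ℝ) := by
    intro M hM
    induction M with
    | zero => omega
    | succ M ih =>
      rcases Nat.eq_or_lt_of_le hM with h | h
      · simp [← h, Finset.sum_range_succ, invsq]
        norm_num
      · have hM1 : 1 ≤ M := by omega
        have hMR : (1:ℝ) ≤ M := by exact_mod_cast hM1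
        rw [Finset.sum_range_succ]
        have h2 : invsq (M+1) = 1/((M:ℝ)+1)^2 := by
          unfold invsq
          rw [if_neg (by omega)]
          push_cast
          ring
        rw [h2]
        have := ih hM1
        have hstep : 1/((M:ℝ)+1)^2 ≤ 1/(M:ℝ) - 1/((M:ℝ)+1) := by
          rw [div_sub_div _ _ (by linarith) (by linarith)]
          rw [div_le_div_iff₀ (by positivity) (by positivity)]
          ring_nf
          nlinarith
        push_cast
        linarith
  intro M
  match M with
  | 0 => simp
  | (M+1) =>
    rcases Nat.eq_or_lt_of_le (Nat.zero_le M) with h | h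
    · simp [← h, invsq]
    · have h1 := key M (by omega)
      have h2 : (0:ℝ) < M := by exact_mod_cast h
      have : (0:ℝ) < 1/(M:ℝ) := by positivity
      linarith

lemma sum_invsq_shift (n : ℕ) : ∑ k ∈ range n, invsq (n - k) ≤ 2 := by
  have h1 : ∑ k ∈ range n, invsq (n - k) = ∑ k ∈ range n, invsq (k+1) := by
    rw [← Finset.sum_range_reflect]
    apply Finset.sum_congr rfl
    intro i hi
    rw [Finset.mem_range] at hi
    congr 1
    omega
  rw [h1]
  have h2 : ∑ k ∈ range n, invsq (k+1) = ∑ k ∈ range (n+1), invsq k := by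
    rw [Finset.sum_range_succ' invsq n]
    simp [invsq]
  rw [h2]
  exact sum_invsq_le (n+1)



lemma abs_sub_le' (a b : ℝ) : |a - b| ≤ |a| + |b| := by
  calc |a - b| = |a + (-b)| := by ring_nf
    _ ≤ |a| + |-b| := abs_add_le _ _
    _ = |a| + |b| := by rw [abs_neg]

def LamF (σ μ h θ : ℝ) : ℂ :=
  ((σ^2*(Real.cos θ - 1)/h^2 : ℝ) : ℂ) + ((μ * Real.sin θ / h : ℝ) : ℂ) * Complex.I

lemma LamF_re (σ μ h θ t : ℝ) : ((t:ℂ) * LamF σ μ h θ).re = t * (σ^2*(Real.cos θ - 1)/h^2) := by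
  simp only [LamF, Complex.mul_re, Complex.add_re, Complex.add_im, Complex.ofReal_re,
    Complex.ofReal_im, Complex.I_re, Complex.I_im, Complex.mul_im]
  ring

lemma LamF_sub (σ μ h h' θ θ' t : ℝ) :
    ‖(t:ℂ) * LamF σ μ h θ - (t:ℂ) * LamF σ μ h' θ'‖
      ≤ |t| * |σ^2*(Real.cos θ - 1)/h^2 - σ^2*(Real.cos θ' - 1)/h'^2|
        + |t| * |μ * Real.sin θ / h - μ * Real.sin θ' / h'| := by
  have hid : (t:ℂ) * LamF σ μ h θ - (t:ℂ) * LamF σ μ h' θ'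
      = ((t * (σ^2*(Real.cos θ - 1)/h^2 - σ^2*(Real.cos θ' - 1)/h'^2) : ℝ) : ℂ)
        + ((t * (μ * Real.sin θ / h - μ * Real.sin θ' / h') : ℝ) : ℂ) * Complex.I := by
    unfold LamF
    push_cast
    ring
  rw [hid]
  refine le_trans (norm_add_le _ _) ?_
  rw [norm_mul, Complex.norm_I, mul_one]
  rw [Complex.norm_real, Complex.norm_real]
  rw [Real.norm_eq_abs, Real.norm_eq_abs, abs_mul, abs_mul]

lemma LamF_period (σ μ h θ : ℝ) : LamF σ μ h (θ + 2*Real.pi) = LamF σ μ h θ := by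
  unfold LamF
  rw [Real.cos_add_two_pi, Real.sin_add_two_pi]

/-- the matched-pair estimate -/
lemma matched_bound (σ μ t : ℝ) (ht : 0 ≤ t) {h θ : ℝ} (hh : 0 < h)
    (hθ : |θ| ≤ Real.pi) :
    ‖Complex.exp ((t:ℂ) * LamF σ μ h θ) - Complex.exp ((t:ℂ) * LamF σ μ (h/2) (θ/2))‖
      ≤ Real.exp (-(2*t*σ^2/Real.pi^2) * (θ/h)^2)
        * (t * h^2 * (σ^2 * (θ/h)^4 + |μ| * |θ/h|^3)) := by
  have hπ := Real.pi_pos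
  have hh2 : (0:ℝ) < h^2 := by positivity
  set ξ : ℝ := θ/h with hξ
  have hθξ : θ = ξ * h := by rw [hξ]; field_simp
  -- real part bounds
  have hre1 : ((t:ℂ) * LamF σ μ h θ).re ≤ -(2*t*σ^2/Real.pi^2) * ξ^2 := by
    rw [LamF_re]
    have hc := Real.cos_le_one_sub_mul_cos_sq hθ
    have key : σ^2*(Real.cos θ - 1)/h^2 ≤ -(2*σ^2/Real.pi^2) * ξ^2 := by
      rw [div_le_iff₀ hh2]
      have hcc : Real.cos θ - 1 ≤ -(2/Real.pi^2)*θ^2 := by linarith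
      calc σ^2*(Real.cos θ - 1) ≤ σ^2 * (-(2/Real.pi^2)*θ^2) :=
            mul_le_mul_of_nonneg_left hcc (sq_nonneg σ)
        _ = -(2*σ^2/Real.pi^2) * ξ^2 * h^2 := by rw [hθξ]; ring
    calc t * (σ^2*(Real.cos θ - 1)/h^2) ≤ t * (-(2*σ^2/Real.pi^2) * ξ^2) :=
          mul_le_mul_of_nonneg_left key ht
      _ = -(2*t*σ^2/Real.pi^2) * ξ^2 := by ring
  have hre2 : ((t:ℂ) * LamF σ μ (h/2) (θ/2)).re ≤ -(2*t*σ^2/Real.pi^2) * ξ^2 := by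
    rw [LamF_re]
    have hθ2 : |θ/2| ≤ Real.pi := by
      rw [abs_div, abs_of_pos (by norm_num : (0:ℝ) < 2)]
      linarith [abs_nonneg θ, hθ]
    have hc := Real.cos_le_one_sub_mul_cos_sq hθ2
    have hh2' : (0:ℝ) < (h/2)^2 := by positivity
    have key : σ^2*(Real.cos (θ/2) - 1)/(h/2)^2 ≤ -(2*σ^2/Real.pi^2) * ξ^2 := by
      rw [div_le_iff₀ hh2']
      have hcc : Real.cos (θ/2) - 1 ≤ -(2/Real.pi^2)*(θ/2)^2 := by linarith
      calc σ^2*(Real.cos (θ/2) - 1) ≤ σ^2 * (-(2/Real.pi^2)*(θ/2)^2) :=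
            mul_le_mul_of_nonneg_left hcc (sq_nonneg σ)
        _ = -(2*σ^2/Real.pi^2) * ξ^2 * (h/2)^2 := by rw [hθξ]; ring
    calc t * (σ^2*(Real.cos (θ/2) - 1)/(h/2)^2) ≤ t * (-(2*σ^2/Real.pi^2) * ξ^2) :=
          mul_le_mul_of_nonneg_left key ht
      _ = -(2*t*σ^2/Real.pi^2) * ξ^2 := by ring
  -- difference of symbols: cosine part
  have hcosdiff : |σ^2*(Real.cos θ - 1)/h^2 - σ^2*(Real.cos (θ/2) - 1)/(h/2)^2|
      ≤ σ^2 * ξ^4 * h^2 := by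
    have t1 := abs_cos_taylor θ
    have t2 := abs_cos_taylor (θ/2)
    have e1 : σ^2*(Real.cos θ - 1)/h^2 - σ^2*(Real.cos (θ/2) - 1)/(h/2)^2
        = σ^2/h^2 * ((Real.cos θ - (1 - θ^2/2)) - 4*(Real.cos (θ/2) - (1 - (θ/2)^2/2))) := by
      field_simp
      ring
    rw [e1, abs_mul]
    have h2 : |(Real.cos θ - (1 - θ^2/2)) - 4*(Real.cos (θ/2) - (1 - (θ/2)^2/2))|
        ≤ θ^4/24 + 4*((θ/2)^4/24) := by
      calc |(Real.cos θ - (1 - θ^2/2)) - 4*(Real.cos (θ/2) - (1 - (θ/2)^2/2))|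
          ≤ |Real.cos θ - (1 - θ^2/2)| + |4*(Real.cos (θ/2) - (1 - (θ/2)^2/2))| := abs_sub_le' _ _
        _ ≤ θ^4/24 + 4*((θ/2)^4/24) := by
            rw [abs_mul, abs_of_pos (by norm_num : (0:ℝ) < 4)]
            linarith [t1, t2]
    have h4 : θ^4/24 + 4*((θ/2)^4/24) ≤ θ^4/2 := by
      have e : ((θ/2):ℝ)^4 = θ^4/16 := by ring
      rw [e]
      have h0 : (0:ℝ) ≤ θ^4 := by positivity
      linarith
    have h3 : |σ^2/h^2| = σ^2/h^2 := abs_of_nonneg (by positivity)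
    rw [h3]
    have h5 : σ^2/h^2 * |(Real.cos θ - (1 - θ^2/2)) - 4*(Real.cos (θ/2) - (1 - (θ/2)^2/2))|
        ≤ σ^2/h^2 * (θ^4/2) := mul_le_mul_of_nonneg_left (le_trans h2 h4) (by positivity)
    refine le_trans h5 ?_
    have e2 : σ^2/h^2 * (θ^4/2) = σ^2*ξ^4*h^2/2 := by
      rw [hθξ]
      field_simp
    rw [e2]
    have h6 : (0:ℝ) ≤ σ^2*ξ^4*h^2 := by positivity
    linarith
  -- sine part
  have hsindiff : |μ * Real.sin θ / h - μ * Real.sin (θ/2) / (h/2)|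
      ≤ |μ| * |ξ|^3 * h^2 := by
    have t1 := abs_sin_taylor θ
    have t2 := abs_sin_taylor (θ/2)
    have e1 : μ * Real.sin θ / h - μ * Real.sin (θ/2) / (h/2)
        = μ/h * ((Real.sin θ - θ) - 2*(Real.sin (θ/2) - θ/2)) := by
      field_simp
      ring
    rw [e1, abs_mul]
    have h2 : |(Real.sin θ - θ) - 2*(Real.sin (θ/2) - θ/2)| ≤ |θ|^3/6 + 2*(|θ/2|^3/6) := by
      calc |(Real.sin θ - θ) - 2*(Real.sin (θ/2) - θ/2)|
          ≤ |Real.sin θ - θ| + |2*(Real.sin (θ/2) - θ/2)| := abs_sub_le' _ _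
        _ ≤ |θ|^3/6 + 2*(|θ/2|^3/6) := by
            rw [abs_mul, abs_of_pos (by norm_num : (0:ℝ) < 2)]
            linarith [t1, t2]
    have h4 : |θ|^3/6 + 2*(|θ/2|^3/6) ≤ |θ|^3/2 := by
      have e : |θ/2| = |θ|/2 := by
        rw [abs_div, abs_of_pos (by norm_num : (0:ℝ) < 2)]
      rw [e]
      have h0 : (0:ℝ) ≤ |θ|^3 := by positivity
      have e2 : ((|θ|/2):ℝ)^3 = |θ|^3/8 := by ring
      rw [e2]
      linarith
    have h5 : |μ/h| * |(Real.sin θ - θ) - 2*(Real.sin (θ/2) - θ/2)| ≤ |μ/h| * (|θ|^3/2) :=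
      mul_le_mul_of_nonneg_left (le_trans h2 h4) (abs_nonneg _)
    refine le_trans h5 ?_
    have hmh : |μ/h| = |μ|/h := by rw [abs_div, abs_of_pos hh]
    rw [hmh]
    have habs : |θ| = |ξ| * h := by
      rw [hθξ, abs_mul, abs_of_pos hh]
    have e2 : |μ|/h * (|θ|^3/2) = |μ| * |ξ|^3 * h^2/2 := by
      rw [habs]
      field_simp
    rw [e2]
    have h6 : (0:ℝ) ≤ |μ| * |ξ|^3 * h^2 := by positivity
    linarith
  -- combine
  have hdiff : ‖(t:ℂ) * LamF σ μ h θ - (t:ℂ) * LamF σ μ (h/2) (θ/2)‖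
      ≤ t * h^2 * (σ^2 * ξ^4 + |μ| * |ξ|^3) := by
    refine le_trans (LamF_sub σ μ h (h/2) θ (θ/2) t) ?_
    rw [abs_of_nonneg ht]
    have c1 := mul_le_mul_of_nonneg_left hcosdiff ht
    have c2 := mul_le_mul_of_nonneg_left hsindiff ht
    nlinarith [c1, c2]
  have hmax : max ((t:ℂ) * LamF σ μ h θ).re ((t:ℂ) * LamF σ μ (h/2) (θ/2)).re
      ≤ -(2*t*σ^2/Real.pi^2) * ξ^2 := max_le hre1 hre2
  have hx4 : (θ/h)^4 = ξ^4 := by rw [hξ]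
  have hx3 : |θ/h|^3 = |ξ|^3 := by rw [hξ]
  have hx2 : (θ/h)^2 = ξ^2 := by rw [hξ]
  rw [hx4, hx3, hx2]
  calc ‖Complex.exp ((t:ℂ) * LamF σ μ h θ) - Complex.exp ((t:ℂ) * LamF σ μ (h/2) (θ/2))‖
      ≤ Real.exp (max ((t:ℂ) * LamF σ μ h θ).re ((t:ℂ) * LamF σ μ (h/2) (θ/2)).re)
        * ‖(t:ℂ) * LamF σ μ h θ - (t:ℂ) * LamF σ μ (h/2) (θ/2)‖ := norm_cexp_sub_cexp _ _
    _ ≤ Real.exp (-(2*t*σ^2/Real.pi^2) * ξ^2) * (t * h^2 * (σ^2 * ξ^4 + |μ| * |ξ|^3)) :=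
        mul_le_mul (Real.exp_le_exp.mpr hmax) hdiff (norm_nonneg _) (Real.exp_pos _).le

lemma unmatched_bound (σ μ t : ℝ) (ht : 0 ≤ t) {h' θ : ℝ} (hh : 0 < h')
    (h1 : Real.pi/2 ≤ θ) (h2 : θ ≤ Real.pi + Real.pi/2) :
    ‖Complex.exp ((t:ℂ) * LamF σ μ h' θ)‖ ≤ Real.exp (-(t*σ^2/h'^2)) := by
  rw [Complex.norm_exp]
  apply Real.exp_le_exp.mpr
  rw [LamF_re]
  have hc : Real.cos θ ≤ 0 := Real.cos_nonpos_of_pi_div_two_le_of_le h1 h2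
  have hh2 : (0:ℝ) < h'^2 := by positivity
  have key : σ^2*(Real.cos θ - 1)/h'^2 ≤ -(σ^2/h'^2) := by
    rw [div_le_iff₀ hh2]
    have he : -(σ^2/h'^2) * h'^2 = -σ^2 := by field_simp
    rw [he]
    nlinarith [mul_nonpos_of_nonneg_of_nonpos (sq_nonneg σ) hc]
  calc t * (σ^2*(Real.cos θ - 1)/h'^2) ≤ t * (-(σ^2/h'^2)) := mul_le_mul_of_nonneg_left key ht
    _ = -(t*σ^2/h'^2) := by ring


-- Part D: DFT diagonalization of the circulant tridiagonal generator

def Pmat (n : ℕ) : Matrix (ZMod n) (ZMod n) ℂ := fun a b => eC n ((a.val:ℤ) * (b.val:ℤ))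

def Qmat (n : ℕ) : Matrix (ZMod n) (ZMod n) ℂ :=
  fun a b => ((n:ℕ):ℂ)⁻¹ * eC n (-((a.val:ℤ) * (b.val:ℤ)))

def triMat (a b c : ℝ) (n : ℕ) : Matrix (ZMod n) (ZMod n) ℝ := fun x y =>
  (if y = x + 1 then a else 0) + (if y = x - 1 then b else 0) + (if y = x then c else 0)

def symb (a b c : ℝ) (n : ℕ) (j : ℤ) : ℂ := (a:ℂ) * eC n j + (b:ℂ) * eC n (-j) + (c:ℂ)

lemma sum_zmod {M : Type*} [AddCommMonoid M] (n : ℕ) [NeZero n] (F : ℕ → M) :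
    ∑ k : ZMod n, F k.val = ∑ i ∈ Finset.range n, F i := by
  apply Finset.sum_nbij' (i := fun (k : ZMod n) => k.val) (j := fun (i : ℕ) => (i : ZMod n))
  · intro a _; exact Finset.mem_range.mpr (ZMod.val_lt a)
  · intro a _; exact Finset.mem_univ _
  · intro a _; exact ZMod.natCast_rightInverse a
  · intro a ha; exact ZMod.val_cast_of_lt (Finset.mem_range.mp ha)
  · intro a _; rfl

lemma orthZ (n : ℕ) [NeZero n] (E : ℤ) :
    ∑ k : ZMod n, eC n ((k.val : ℤ) * E) = if ((E : ZMod n) = 0) then (n:ℂ) else 0 := by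
  have hn : 0 < n := Nat.pos_of_ne_zero (NeZero.ne n)
  rw [sum_zmod n (fun i => eC n ((i:ℤ) * E)), eC_orth n hn E]
  have : ((E : ZMod n) = 0) ↔ ((n:ℤ) ∣ E) := ZMod.intCast_zmod_eq_zero_iff_dvd E n
  simp only [this]

lemma val_sub_cast (n : ℕ) [NeZero n] (x y : ZMod n) (j : ℤ) :
    ((((x.val:ℤ) - (y.val:ℤ) + j : ℤ)) : ZMod n) = x - y + (j : ZMod n) := by
  push_cast [ZMod.natCast_val, ZMod.cast_id]
  ring

lemma PQ_eq_one (n : ℕ) [NeZero n] : Pmat n * Qmat n = 1 := by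
  have hn : 0 < n := Nat.pos_of_ne_zero (NeZero.ne n)
  have hnC : ((n:ℕ):ℂ) ≠ 0 := Nat.cast_ne_zero.mpr hn.ne'
  ext x y
  rw [Matrix.mul_apply, Matrix.one_apply]
  have hterm : ∀ k : ZMod n, Pmat n x k * Qmat n k y
      = ((n:ℕ):ℂ)⁻¹ * eC n ((k.val:ℤ) * ((x.val:ℤ) - (y.val:ℤ))) := by
    intro k
    unfold Pmat Qmat
    rw [show eC n ((x.val:ℤ) * (k.val:ℤ)) * (((n:ℕ):ℂ)⁻¹ * eC n (-((k.val:ℤ) * (y.val:ℤ))))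
        = ((n:ℕ):ℂ)⁻¹ * (eC n ((x.val:ℤ) * (k.val:ℤ)) * eC n (-((k.val:ℤ) * (y.val:ℤ)))) from by ring]
    rw [← eC_add]
    congr 2
    ring
  rw [Finset.sum_congr rfl (fun k _ => hterm k), ← Finset.mul_sum]
  have := orthZ n ((x.val:ℤ) - (y.val:ℤ))
  rw [this]
  have hcond : ((((x.val:ℤ) - (y.val:ℤ)) : ℤ) : ZMod n) = 0 ↔ x = y := by
    have := val_sub_cast n x y 0
    simp only [add_zero, Int.cast_zero] at this
    rw [this, sub_eq_zero]
  by_cases hxy : x = y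
  · rw [if_pos (hcond.mpr hxy), if_pos hxy, inv_mul_cancel₀ hnC]
  · rw [if_neg (fun hc => hxy (hcond.mp hc)), if_neg hxy, mul_zero]

lemma QP_eq_one (n : ℕ) [NeZero n] : Qmat n * Pmat n = 1 :=
  mul_eq_one_comm.mp (PQ_eq_one n)

lemma PDQ_entry (n : ℕ) [NeZero n] (v : ZMod n → ℂ) (x y : ZMod n) :
    (Pmat n * Matrix.diagonal v * Qmat n) x y
      = ((n:ℕ):ℂ)⁻¹ * ∑ k : ZMod n, v k * eC n ((k.val:ℤ) * ((x.val:ℤ) - (y.val:ℤ))) := by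
  rw [Matrix.mul_apply]
  have h1 : ∀ k : ZMod n, (Pmat n * Matrix.diagonal v) x k * Qmat n k y
      = ((n:ℕ):ℂ)⁻¹ * (v k * eC n ((k.val:ℤ) * ((x.val:ℤ) - (y.val:ℤ)))) := by
    intro k
    rw [Matrix.mul_diagonal]
    unfold Pmat Qmat
    rw [show eC n ((x.val:ℤ) * (k.val:ℤ)) * v k * (((n:ℕ):ℂ)⁻¹ * eC n (-((k.val:ℤ) * (y.val:ℤ))))
        = ((n:ℕ):ℂ)⁻¹ * (v k * (eC n ((x.val:ℤ) * (k.val:ℤ)) * eC n (-((k.val:ℤ) * (y.val:ℤ)))))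
      from by ring]
    rw [← eC_add]
    congr 3
    ring
  rw [Finset.sum_congr rfl (fun k _ => h1 k), ← Finset.mul_sum]

lemma triMat_diag (a b c : ℝ) (n : ℕ) [NeZero n] :
    (triMat a b c n).map (fun r : ℝ => (r:ℂ))
      = Pmat n * Matrix.diagonal (fun k : ZMod n => symb a b c n (k.val:ℤ)) * Qmat n := by
  have hn : 0 < n := Nat.pos_of_ne_zero (NeZero.ne n)
  have hnC : ((n:ℕ):ℂ) ≠ 0 := Nat.cast_ne_zero.mpr hn.ne'
  ext x y
  rw [Matrix.map_apply, PDQ_entry]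
  set D : ℤ := (x.val:ℤ) - (y.val:ℤ) with hD
  have hterm : ∀ k : ZMod n, symb a b c n (k.val:ℤ) * eC n ((k.val:ℤ) * D)
      = (a:ℂ) * eC n ((k.val:ℤ) * (D+1)) + (b:ℂ) * eC n ((k.val:ℤ) * (D-1))
        + (c:ℂ) * eC n ((k.val:ℤ) * D) := by
    intro k
    unfold symb
    rw [add_mul, add_mul, mul_assoc, mul_assoc, ← eC_add, ← eC_add]
    rw [show (k.val:ℤ) + (k.val:ℤ) * D = (k.val:ℤ) * (D+1) from by ring]
    rw [show -(k.val:ℤ) + (k.val:ℤ) * D = (k.val:ℤ) * (D-1) from by ring]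
  rw [Finset.sum_congr rfl (fun k _ => hterm k)]
  rw [Finset.sum_add_distrib, Finset.sum_add_distrib, ← Finset.mul_sum, ← Finset.mul_sum,
    ← Finset.mul_sum]
  rw [orthZ n (D+1), orthZ n (D-1), orthZ n D]
  have hc1 : (((D + 1 : ℤ)) : ZMod n) = 0 ↔ y = x + 1 := by
    rw [hD, val_sub_cast n x y 1]
    push_cast
    constructor <;> intro hh <;> linear_combination -hh
  have hc2 : (((D - 1 : ℤ)) : ZMod n) = 0 ↔ y = x - 1 := by
    rw [hD, show (D - 1 : ℤ) = D + (-1) from by ring, val_sub_cast n x y (-1)]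
    push_cast
    constructor <;> intro hh <;> linear_combination -hh
  have hc3 : ((D : ℤ) : ZMod n) = 0 ↔ y = x := by
    rw [hD]
    have := val_sub_cast n x y 0
    simp only [add_zero, Int.cast_zero] at this
    rw [this, sub_eq_zero]
    exact eq_comm
  rw [show triMat a b c n x y = (if y = x + 1 then a else 0) + (if y = x - 1 then b else 0)
    + (if y = x then c else 0) from rfl]
  simp only [apply_ite (fun r : ℝ => (r:ℂ)), Complex.ofReal_add, Complex.ofReal_zero]
  simp only [hc1, hc2, hc3]
  split_ifs <;> field_simp <;> ring

lemma exp_triMat (a b c : ℝ) (t : ℝ) (n : ℕ) [NeZero n] (x y : ZMod n) :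
    ((NormedSpace.exp (t • triMat a b c n) x y : ℝ) : ℂ)
      = ((n:ℕ):ℂ)⁻¹ * ∑ i ∈ Finset.range n,
          Complex.exp ((t:ℂ) * symb a b c n (i:ℤ))
            * eC n ((i:ℤ) * ((x.val:ℤ) - (y.val:ℤ))) := by
  -- step 1: smul identity
  have hsmul : (t • triMat a b c n).map (fun r : ℝ => (r:ℂ))
      = Pmat n * Matrix.diagonal (fun k : ZMod n => (t:ℂ) * symb a b c n (k.val:ℤ)) * Qmat n := by
    have h1 : (t • triMat a b c n).map (fun r : ℝ => (r:ℂ))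
        = (t:ℂ) • ((triMat a b c n).map (fun r : ℝ => (r:ℂ))) := by
      ext i j
      simp [Matrix.map_apply, Matrix.smul_apply, Complex.ofReal_mul, Complex.real_smul]
    have h2 : Matrix.diagonal (fun k : ZMod n => (t:ℂ) * symb a b c n (k.val:ℤ))
        = (t:ℂ) • Matrix.diagonal (fun k : ZMod n => symb a b c n (k.val:ℤ)) := by
      ext i j
      by_cases hij : i = j <;> simp [Matrix.diagonal_apply, hij]
    rw [h1, triMat_diag, h2, Matrix.mul_smul, Matrix.smul_mul]
  -- step 2: commute exp with the entrywise real→complex map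
  have hmapexp : (NormedSpace.exp (t • triMat a b c n)).map (fun r : ℝ => (r:ℂ))
      = NormedSpace.exp ((t • triMat a b c n).map (fun r : ℝ => (r:ℂ))) := by
    letI : SeminormedRing (Matrix (ZMod n) (ZMod n) ℝ) := Matrix.linftyOpSemiNormedRing
    letI : NormedRing (Matrix (ZMod n) (ZMod n) ℝ) := Matrix.linftyOpNormedRing
    letI : NormedAlgebra ℝ (Matrix (ZMod n) (ZMod n) ℝ) := Matrix.linftyOpNormedAlgebra
    letI : SeminormedRing (Matrix (ZMod n) (ZMod n) ℂ) := Matrix.linftyOpSemiNormedRing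
    letI : NormedRing (Matrix (ZMod n) (ZMod n) ℂ) := Matrix.linftyOpNormedRing
    letI : NormedAlgebra ℝ (Matrix (ZMod n) (ZMod n) ℂ) := Matrix.linftyOpNormedAlgebra
    letI : NormedAlgebra ℚ (Matrix (ZMod n) (ZMod n) ℝ) := Matrix.linftyOpNormedAlgebra
    letI : NormedAlgebra ℚ (Matrix (ZMod n) (ZMod n) ℂ) := Matrix.linftyOpNormedAlgebra
    have hf : Continuous
        (Complex.ofRealHom.mapMatrix : Matrix (ZMod n) (ZMod n) ℝ →+* Matrix (ZMod n) (ZMod n) ℂ) :=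
      continuous_id.matrix_map Complex.continuous_ofReal
    have := NormedSpace.map_exp
      (Complex.ofRealHom.mapMatrix : Matrix (ZMod n) (ZMod n) ℝ →+* Matrix (ZMod n) (ZMod n) ℂ)
      hf (t • triMat a b c n)
    exact this
  -- step 3: exp of the conjugated diagonal
  have hU : NormedSpace.exp
      (Pmat n * Matrix.diagonal (fun k : ZMod n => (t:ℂ) * symb a b c n (k.val:ℤ)) * Qmat n)
      = Pmat n * Matrix.diagonal
          (fun k : ZMod n => Complex.exp ((t:ℂ) * symb a b c n (k.val:ℤ))) * Qmat n := by
    let U : (Matrix (ZMod n) (ZMod n) ℂ)ˣ := ⟨Pmat n, Qmat n, PQ_eq_one n, QP_eq_one n⟩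
    have hconj := Matrix.exp_units_conj U
      (Matrix.diagonal (fun k : ZMod n => (t:ℂ) * symb a b c n (k.val:ℤ)))
    have hUinv : ((U⁻¹ : (Matrix (ZMod n) (ZMod n) ℂ)ˣ) : Matrix (ZMod n) (ZMod n) ℂ) = Qmat n := rfl
    have hUval : ((U : (Matrix (ZMod n) (ZMod n) ℂ)ˣ) : Matrix (ZMod n) (ZMod n) ℂ) = Pmat n := rfl
    rw [hUval, hUinv] at hconj
    rw [hconj, Matrix.exp_diagonal, Pi.exp_def]
    have hfun : (fun i : ZMod n => NormedSpace.exp ((t:ℂ) * symb a b c n (i.val:ℤ)))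
        = (fun k : ZMod n => Complex.exp ((t:ℂ) * symb a b c n (k.val:ℤ))) := by
      funext i
      exact (congr_fun Complex.exp_eq_exp_ℂ _).symm
    rw [hfun]
  -- assemble
  have hentry : ((NormedSpace.exp (t • triMat a b c n) x y : ℝ) : ℂ)
      = ((NormedSpace.exp (t • triMat a b c n)).map (fun r : ℝ => (r:ℂ))) x y := rfl
  rw [hentry, hmapexp, hsmul, hU, PDQ_entry]
  congr 1
  exact sum_zmod n (fun i => Complex.exp ((t:ℂ) * symb a b c n (i:ℤ))
    * eC n ((i:ℤ) * ((x.val:ℤ) - (y.val:ℤ))))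

-- Part E : kernel formula, embedding, frequency bounds

lemma hstep_pos {L : ℝ} (hL : 0 < L) (m : ℕ) : 0 < hstep L m := by
  unfold hstep; positivity

lemma hstep_succ (L : ℝ) (m : ℕ) : hstep L (m+1) = hstep L m / 2 := by
  unfold hstep
  rw [pow_succ]
  ring

lemma hstep_le {L : ℝ} (hL : 0 < L) (m : ℕ) : hstep L m ≤ L := by
  unfold hstep
  rw [div_le_iff₀ (by positivity)]
  have h1 : (1:ℝ) ≤ 2^m := one_le_pow₀ (by norm_num : (1:ℝ) ≤ 2)
  nlinarith

lemma hstep_mul_pow (L : ℝ) (m : ℕ) : hstep L m * ((2^(m+1) : ℕ) : ℝ) = 2 * L := by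
  unfold hstep
  push_cast
  rw [pow_succ]
  field_simp

lemma symb_LamF (σ μ h : ℝ) (hh : h ≠ 0) (n : ℕ) (i : ℤ) :
    symb (σ^2/(2*h^2) + μ/(2*h)) (σ^2/(2*h^2) - μ/(2*h)) (-σ^2/h^2) n i
      = LamF σ μ h (2*Real.pi*(i:ℝ)/(n:ℝ)) := by
  have e1 : eC n i = ((Real.cos (2*Real.pi*(i:ℝ)/(n:ℝ)) : ℝ):ℂ)
      + ((Real.sin (2*Real.pi*(i:ℝ)/(n:ℝ)):ℝ):ℂ) * Complex.I := by
    rw [eC, Complex.exp_mul_I, ← Complex.ofReal_cos, ← Complex.ofReal_sin]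
  have e2 : eC n (-i) = ((Real.cos (2*Real.pi*(i:ℝ)/(n:ℝ)) : ℝ):ℂ)
      - ((Real.sin (2*Real.pi*(i:ℝ)/(n:ℝ)):ℝ):ℂ) * Complex.I := by
    rw [eC, show ((2*Real.pi*(((-i) : ℤ):ℝ)/(n:ℝ) : ℝ)) = -(2*Real.pi*(i:ℝ)/(n:ℝ)) from by
      push_cast; ring]
    rw [Complex.exp_mul_I, ← Complex.ofReal_cos, ← Complex.ofReal_sin,
      Real.cos_neg, Real.sin_neg]
    push_cast
    ring
  unfold symb LamF
  rw [e1, e2]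
  rw [Complex.ext_iff]
  constructor <;>
    simp only [Complex.add_re, Complex.add_im, Complex.sub_re, Complex.sub_im, Complex.mul_re,
      Complex.mul_im, Complex.ofReal_re, Complex.ofReal_im, Complex.I_re, Complex.I_im] <;>
    field_simp <;>
    ring

lemma kernel_formula (L σv μv t : ℝ) (hL : 0 < L) (m : ℕ) (x y : ZMod (2^(m+1))) :
    ((kernel L (fun _ => σv) (fun _ => μv) m t x y : ℝ) : ℂ)
      = (((2*L : ℝ)) : ℂ)⁻¹ * ∑ i ∈ Finset.range (2^(m+1)),
          Complex.exp ((t:ℂ) * LamF σv μv (hstep L m) (2*Real.pi*(i:ℝ)/((2^(m+1):ℕ):ℝ)))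
            * eC (2^(m+1)) ((i:ℤ) * ((x.val : ℤ) - (y.val : ℤ))) := by
  haveI : NeZero (2^(m+1) : ℕ) := ⟨pow_ne_zero _ (by norm_num)⟩
  have hh : 0 < hstep L m := hstep_pos hL m
  have hgen : gen L (fun _ => σv) (fun _ => μv) m
      = triMat (σv^2/(2*hstep L m^2) + μv/(2*hstep L m))
          (σv^2/(2*hstep L m^2) - μv/(2*hstep L m)) (-σv^2/hstep L m^2) (2^(m+1)) := rfl
  unfold kernel
  rw [hgen, Complex.ofReal_mul, exp_triMat]
  have hsum : ∀ i ∈ Finset.range (2^(m+1)),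
      Complex.exp ((t:ℂ) * symb (σv^2/(2*hstep L m^2) + μv/(2*hstep L m))
          (σv^2/(2*hstep L m^2) - μv/(2*hstep L m)) (-σv^2/hstep L m^2) (2^(m+1)) (i:ℤ))
        * eC (2^(m+1)) ((i:ℤ) * ((x.val : ℤ) - (y.val : ℤ)))
      = Complex.exp ((t:ℂ) * LamF σv μv (hstep L m) (2*Real.pi*(i:ℝ)/((2^(m+1):ℕ):ℝ)))
        * eC (2^(m+1)) ((i:ℤ) * ((x.val : ℤ) - (y.val : ℤ))) := by
    intro i _
    rw [symb_LamF σv μv (hstep L m) hh.ne' (2^(m+1)) (i:ℤ)]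
    norm_num
  rw [← mul_assoc, Finset.sum_congr rfl hsum]
  have hconst : ((hstep L m)⁻¹ : ℝ) * (((2^(m+1):ℕ):ℝ))⁻¹ = (2*L)⁻¹ := by
    rw [← mul_inv]
    congr 1
    exact hstep_mul_pow L m
  push_cast
  congr 1
  have hconstC := congrArg (fun r : ℝ => (r:ℂ)) hconst
  push_cast at hconstC
  linear_combination hconstC

lemma embed_phase (m : ℕ) (x y : ZMod (2^(m+1))) (i : ℕ) :
    eC (2^(m+1+1)) ((i:ℤ) * (((embed m (m+1) x).val : ℤ) - ((embed m (m+1) y).val : ℤ)))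
      = eC (2^(m+1)) ((i:ℤ) * ((x.val:ℤ) - (y.val:ℤ))) := by
  haveI : NeZero (2^(m+1+1) : ℕ) := ⟨pow_ne_zero _ (by norm_num)⟩
  have hMR : ((2^(m+1+1):ℕ):ℝ) ≠ 0 := by positivity
  have hnR : ((2^(m+1):ℕ):ℝ) ≠ 0 := by positivity
  have hval : ∀ z : ZMod (2^(m+1)), ((embed m (m+1) z).val : ℤ)
      = (((2 * z.val) % (2^(m+1+1)) : ℕ) : ℤ) := by
    intro z
    unfold embed
    rw [ZMod.val_natCast]
    congr 2
    norm_num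
  have hdvd : ∀ a : ℕ, ((2^(m+1+1):ℕ):ℤ) ∣ ((((2*a) % (2^(m+1+1)) : ℕ) : ℤ) - 2*(a:ℤ)) := by
    intro a
    have hma := Nat.mod_add_div (2*a) (2^(m+1+1))
    refine ⟨-(((2*a)/(2^(m+1+1)) : ℕ) : ℤ), ?_⟩
    have : (((2*a) % (2^(m+1+1)) : ℕ) : ℤ) + ((2^(m+1+1):ℕ):ℤ) * (((2*a)/(2^(m+1+1)) : ℕ) : ℤ)
        = 2*(a:ℤ) := by exact_mod_cast congrArg (fun u : ℕ => (u:ℤ)) hma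
    linarith
  have hstep1 : eC (2^(m+1+1)) ((i:ℤ) * (((embed m (m+1) x).val : ℤ) - ((embed m (m+1) y).val : ℤ)))
      = eC (2^(m+1+1)) ((i:ℤ) * (2*((x.val:ℤ) - (y.val:ℤ)))) := by
    apply eC_dvd_congr _ hMR
    rw [hval x, hval y]
    have h1 := hdvd x.val
    have h2 := hdvd y.val
    have : (i:ℤ) * (((((2*x.val) % (2^(m+1+1)) : ℕ) : ℤ) - (((2*y.val) % (2^(m+1+1)) : ℕ) : ℤ)))
        - (i:ℤ) * (2*((x.val:ℤ) - (y.val:ℤ)))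
        = (i:ℤ) * (((((2*x.val) % (2^(m+1+1)) : ℕ) : ℤ) - 2*(x.val:ℤ))
            - ((((2*y.val) % (2^(m+1+1)) : ℕ) : ℤ) - 2*(y.val:ℤ))) := by ring
    rw [this]
    exact Dvd.dvd.mul_left (dvd_sub h1 h2) (i:ℤ)
  rw [hstep1]
  have hpow : (2^(m+1+1) : ℕ) = 2 * 2^(m+1) := by ring
  rw [hpow, show (i:ℤ) * (2*((x.val:ℤ) - (y.val:ℤ))) = 2*((i:ℤ)*((x.val:ℤ) - (y.val:ℤ)))
    from by ring]
  exact eC_double (2^(m+1)) hnR _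


-- Part F : frequency bound and per-index estimate

def Kc (sg mu t L : ℝ) : ℝ :=
  27*(sg^2*(Real.pi/L)^4 + |mu| * (Real.pi/L)^3)/(2*t*sg^2/L^2)^3

lemma Kc_pos {sg mu t L : ℝ} (hsg : 0 < sg) (ht : 0 < t) (hL : 0 < L) : 0 < Kc sg mu t L := by
  have hpi := Real.pi_pos
  unfold Kc
  apply div_pos
  · have h1 : 0 < sg^2*(Real.pi/L)^4 := by positivity
    have h2 : 0 ≤ |mu| * (Real.pi/L)^3 := by positivity
    nlinarith
  · positivity

lemma freq_bound (sg mu t L : ℝ) (ht : 0 < t) (hsg : 0 < sg) (hL : 0 < L) {h th : ℝ}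
    (hh : 0 < h) (j : ℕ) (hj : 1 ≤ j) (hxi : |th/h| = Real.pi*(j:ℝ)/L) :
    Real.exp (-(2*t*sg^2/Real.pi^2) * (th/h)^2) * (t * h^2 * (sg^2 * (th/h)^4 + |mu| * |th/h|^3))
      ≤ t * h^2 * Kc sg mu t L * invsq j := by
  have hpi := Real.pi_pos
  set bb := 2*t*sg^2/L^2 with hbb
  have hbpos : 0 < bb := by rw [hbb]; positivity
  have hj0 : (0:ℝ) < (j:ℝ) := by exact_mod_cast Nat.lt_of_lt_of_le Nat.zero_lt_one hj
  have hj1 : (1:ℝ) ≤ (j:ℝ) := by exact_mod_cast hj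
  have h2 : (th/h)^2 = (Real.pi*(j:ℝ)/L)^2 := by rw [← sq_abs, hxi]
  have h4 : (th/h)^4 = (Real.pi*(j:ℝ)/L)^4 := by
    rw [show (th/h)^4 = ((th/h)^2)^2 from by ring, h2]; ring
  have h3 : |th/h|^3 = (Real.pi*(j:ℝ)/L)^3 := by rw [hxi]
  rw [h2, h4, h3]
  rw [show -(2*t*sg^2/Real.pi^2) * (Real.pi*(j:ℝ)/L)^2 = -(bb*(j:ℝ)^2) from by
    rw [hbb]; field_simp <;> ring]
  have hexp : Real.exp (-(bb*(j:ℝ)^2)) ≤ 27/(bb*(j:ℝ)^2)^3 :=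
    exp_neg_le_cube (by positivity)
  have hXnn : (0:ℝ) ≤ t * h^2 * (sg^2 * (Real.pi*(j:ℝ)/L)^4 + |mu| * (Real.pi*(j:ℝ)/L)^3) := by
    positivity
  calc Real.exp (-(bb*(j:ℝ)^2))
        * (t * h^2 * (sg^2 * (Real.pi*(j:ℝ)/L)^4 + |mu| * (Real.pi*(j:ℝ)/L)^3))
      ≤ 27/(bb*(j:ℝ)^2)^3 * (t * h^2 * (sg^2 * (Real.pi*(j:ℝ)/L)^4 + |mu| * (Real.pi*(j:ℝ)/L)^3)) :=
        mul_le_mul_of_nonneg_right hexp hXnn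
    _ ≤ t * h^2 * Kc sg mu t L * invsq j := by
        unfold Kc invsq
        rw [if_neg (by omega : j ≠ 0), ← hbb]
        have e1 : 27/(bb*(j:ℝ)^2)^3
              * (t * h^2 * (sg^2 * (Real.pi*(j:ℝ)/L)^4 + |mu| * (Real.pi*(j:ℝ)/L)^3))
            = t * h^2 * (27*sg^2*(Real.pi/L)^4/(bb^3*(j:ℝ)^2)
                + 27*|mu| * (Real.pi/L)^3/(bb^3*(j:ℝ)^3)) := by
          field_simp
        have e2 : t * h^2 * (27*(sg^2*(Real.pi/L)^4 + |mu| * (Real.pi/L)^3)/bb^3) * (1/(j:ℝ)^2)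
            = t * h^2 * (27*sg^2*(Real.pi/L)^4/(bb^3*(j:ℝ)^2)
                + 27*|mu| * (Real.pi/L)^3/(bb^3*(j:ℝ)^2)) := by
          field_simp
        rw [e1, e2]
        apply mul_le_mul_of_nonneg_left _ (by positivity : (0:ℝ) ≤ t * h^2)
        apply add_le_add le_rfl
        rw [div_le_div_iff₀ (by positivity) (by positivity)]
        have hA : (0:ℝ) ≤ 27*|mu| * (Real.pi/L)^3 := by positivity
        nlinarith [mul_nonneg (mul_nonneg hA (le_of_lt (pow_pos hbpos 3)))
          (mul_nonneg (sq_nonneg (j:ℝ)) (sub_nonneg.mpr hj1))]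

lemma per_i (sg mu t L : ℝ) (ht : 0 < t) (hsg : 0 < sg) (hL : 0 < L) (m i : ℕ)
    (hi : i < 2^(m+1)) :
    ‖Complex.exp ((t:ℂ) * LamF sg mu (hstep L m) (2*Real.pi*(i:ℝ)/((2^(m+1):ℕ):ℝ)))
      - Complex.exp ((t:ℂ) * LamF sg mu (hstep L (m+1)) (2*Real.pi*(i:ℝ)/((2^(m+1+1):ℕ):ℝ)))
      - Complex.exp ((t:ℂ) * LamF sg mu (hstep L (m+1))
          (2*Real.pi*((2^(m+1) + i : ℕ):ℝ)/((2^(m+1+1):ℕ):ℝ)))‖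
    ≤ t * (hstep L m)^2 * Kc sg mu t L * (invsq i + invsq (2^(m+1) - i))
      + Real.exp (-(4*t*sg^2/(hstep L m)^2)) := by
  have hpi := Real.pi_pos
  have hh : 0 < hstep L m := hstep_pos hL m
  have hh2 : hstep L (m+1) = hstep L m / 2 := hstep_succ L m
  set h : ℝ := hstep L m with hhdef
  have hnR : (0:ℝ) < ((2^(m+1):ℕ):ℝ) := by positivity
  have hNh : h * ((2^(m+1):ℕ):ℝ) = 2*L := hstep_mul_pow L m
  have hcast2 : ((2^(m+1+1):ℕ):ℝ) = 2*((2^(m+1):ℕ):ℝ) := by push_cast; ring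
  have hiR : (i:ℝ) < ((2^(m+1):ℕ):ℝ) := by exact_mod_cast hi
  have hinn : (0:ℝ) ≤ (i:ℝ) := Nat.cast_nonneg i
  have hKpos := Kc_pos (mu := mu) hsg ht hL
  have hKnn : (0:ℝ) ≤ t * h^2 * Kc sg mu t L :=
    le_of_lt (mul_pos (mul_pos ht (pow_pos hh 2)) hKpos)
  have a1 : 2*Real.pi*(i:ℝ)/((2^(m+1+1):ℕ):ℝ) = (2*Real.pi*(i:ℝ)/((2^(m+1):ℕ):ℝ))/2 := by
    rw [hcast2]; ring
  have a2 : 2*Real.pi*((2^(m+1) + i : ℕ):ℝ)/((2^(m+1+1):ℕ):ℝ)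
      = Real.pi*(((2^(m+1):ℕ):ℝ)+(i:ℝ))/((2^(m+1):ℕ):ℝ) := by
    rw [hcast2]; push_cast; ring
  have hexp4 : ∀ ps : ℝ, Real.pi/2 ≤ ps → ps ≤ Real.pi + Real.pi/2 →
      ‖Complex.exp ((t:ℂ) * LamF sg mu (hstep L (m+1)) ps)‖
        ≤ Real.exp (-(4*t*sg^2/h^2)) := by
    intro ps hlo hhi
    have hb := unmatched_bound sg mu t ht.le (h' := hstep L (m+1))
      (by rw [hh2]; positivity) hlo hhi
    refine le_trans hb (le_of_eq ?_)
    congr 1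
    rw [hh2]
    field_simp <;> ring
  by_cases hcase : 2*i ≤ 2^(m+1)
  · -- low frequency : matched index is i
    have hcaseR : 2*(i:ℝ) ≤ ((2^(m+1):ℕ):ℝ) := by exact_mod_cast hcase
    set th : ℝ := 2*Real.pi*(i:ℝ)/((2^(m+1):ℕ):ℝ) with hthdef
    have hthnn : 0 ≤ th := by rw [hthdef]; positivity
    have hthabs : |th| ≤ Real.pi := by
      rw [abs_of_nonneg hthnn, hthdef, div_le_iff₀ hnR]
      nlinarith [mul_le_mul_of_nonneg_left hcaseR hpi.le]
    have hmatch : ‖Complex.exp ((t:ℂ) * LamF sg mu h th)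
        - Complex.exp ((t:ℂ) * LamF sg mu (hstep L (m+1)) (2*Real.pi*(i:ℝ)/((2^(m+1+1):ℕ):ℝ)))‖
        ≤ Real.exp (-(2*t*sg^2/Real.pi^2) * (th/h)^2)
          * (t * h^2 * (sg^2 * (th/h)^4 + |mu| * |th/h|^3)) := by
      rw [a1, hh2]
      exact matched_bound sg mu t ht.le hh hthabs
    have hfreq : Real.exp (-(2*t*sg^2/Real.pi^2) * (th/h)^2)
          * (t * h^2 * (sg^2 * (th/h)^4 + |mu| * |th/h|^3))
        ≤ t * h^2 * Kc sg mu t L * (invsq i + invsq (2^(m+1) - i)) := by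
      rcases Nat.eq_zero_or_pos i with hi0 | hipos
      · subst hi0
        have hth0 : th = 0 := by rw [hthdef]; norm_num
        rw [hth0]
        have hz : Real.exp (-(2*t*sg^2/Real.pi^2) * ((0:ℝ)/h)^2)
            * (t*h^2*(sg^2*((0:ℝ)/h)^4 + |mu| *|(0:ℝ)/h|^3)) = 0 := by
          norm_num
        rw [hz]
        exact mul_nonneg hKnn (add_nonneg (invsq_nonneg _) (invsq_nonneg _))
      · have hxi : |th/h| = Real.pi*(i:ℝ)/L := by
          rw [abs_of_nonneg (by positivity), hthdef, div_div,
            mul_comm ((2^(m+1):ℕ):ℝ) h, hNh, div_eq_div_iff (by positivity) (by positivity)]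
          ring
        refine le_trans (freq_bound sg mu t L ht hsg hL hh i hipos hxi) ?_
        exact mul_le_mul_of_nonneg_left (le_add_of_nonneg_right (invsq_nonneg _)) hKnn
    have hun : ‖Complex.exp ((t:ℂ) * LamF sg mu (hstep L (m+1))
          (2*Real.pi*((2^(m+1) + i : ℕ):ℝ)/((2^(m+1+1):ℕ):ℝ)))‖
        ≤ Real.exp (-(4*t*sg^2/h^2)) := by
      rw [a2]
      apply hexp4
      · rw [le_div_iff₀ hnR]
        nlinarith [mul_nonneg hpi.le hinn, mul_pos hpi hnR]
      · rw [div_le_iff₀ hnR]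
        nlinarith [mul_le_mul_of_nonneg_left hcaseR hpi.le, mul_pos hpi hnR]
    refine le_trans (norm_sub_le _ _) ?_
    exact add_le_add (le_trans hmatch hfreq) hun
  · -- high frequency : matched index is 2^(m+1)+i
    push_neg at hcase
    have hcaseR : ((2^(m+1):ℕ):ℝ) < 2*(i:ℝ) := by exact_mod_cast hcase
    set j : ℕ := 2^(m+1) - i with hjdef
    have hj1 : 1 ≤ j := by omega
    have hjR : (j:ℝ) = ((2^(m+1):ℕ):ℝ) - (i:ℝ) := by
      rw [hjdef]
      push_cast [Nat.cast_sub (le_of_lt hi)]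
      ring
    set th : ℝ := -(2*Real.pi*(j:ℝ)/((2^(m+1):ℕ):ℝ)) with hthdef
    have hthabs : |th| ≤ Real.pi := by
      rw [hthdef, abs_neg, abs_of_nonneg (by positivity), div_le_iff₀ hnR, hjR]
      linarith [mul_lt_mul_of_pos_left hcaseR hpi]
    have hang1 : 2*Real.pi*(i:ℝ)/((2^(m+1):ℕ):ℝ) = th + 2*Real.pi := by
      rw [hthdef, hjR]
      field_simp <;> ring
    have hang3 : 2*Real.pi*((2^(m+1) + i : ℕ):ℝ)/((2^(m+1+1):ℕ):ℝ) = th/2 + 2*Real.pi := by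
      rw [a2, hthdef, hjR]
      field_simp <;> ring
    have hmatch : ‖Complex.exp ((t:ℂ) * LamF sg mu h (2*Real.pi*(i:ℝ)/((2^(m+1):ℕ):ℝ)))
        - Complex.exp ((t:ℂ) * LamF sg mu (hstep L (m+1))
            (2*Real.pi*((2^(m+1) + i : ℕ):ℝ)/((2^(m+1+1):ℕ):ℝ)))‖
        ≤ Real.exp (-(2*t*sg^2/Real.pi^2) * (th/h)^2)
          * (t * h^2 * (sg^2 * (th/h)^4 + |mu| * |th/h|^3)) := by
      rw [hang1, hang3, LamF_period, LamF_period, hh2]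
      exact matched_bound sg mu t ht.le hh hthabs
    have hfreq : Real.exp (-(2*t*sg^2/Real.pi^2) * (th/h)^2)
          * (t * h^2 * (sg^2 * (th/h)^4 + |mu| * |th/h|^3))
        ≤ t * h^2 * Kc sg mu t L * (invsq i + invsq (2^(m+1) - i)) := by
      have hxi : |th/h| = Real.pi*(j:ℝ)/L := by
        rw [hthdef, neg_div, abs_neg, div_div, abs_of_nonneg (by positivity),
          mul_comm ((2^(m+1):ℕ):ℝ) h, hNh, div_eq_div_iff (by positivity) (by positivity)]
        ring
      refine le_trans (freq_bound sg mu t L ht hsg hL hh j hj1 hxi) ?_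
      rw [← hjdef]
      exact mul_le_mul_of_nonneg_left (le_add_of_nonneg_left (invsq_nonneg _)) hKnn
    have hun : ‖Complex.exp ((t:ℂ) * LamF sg mu (hstep L (m+1))
          (2*Real.pi*(i:ℝ)/((2^(m+1+1):ℕ):ℝ)))‖
        ≤ Real.exp (-(4*t*sg^2/h^2)) := by
      rw [a1]
      apply hexp4
      · rw [le_div_iff₀ (by norm_num : (0:ℝ) < 2), div_mul_eq_mul_div, le_div_iff₀ hnR]
        nlinarith [mul_le_mul_of_nonneg_left hcaseR.le hpi.le]
      · rw [div_le_iff₀ (by norm_num : (0:ℝ) < 2), div_le_iff₀ hnR]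
        nlinarith [mul_le_mul_of_nonneg_left hiR.le hpi.le, mul_pos hpi hnR]
    rw [sub_right_comm]
    refine le_trans (norm_sub_le _ _) ?_
    exact add_le_add (le_trans hmatch hfreq) hun

end KernelConvAux

/-- Constant coefficients: kernel convergence at consecutive resolutions,
`|u_m(x,y;t) - u_{m+1}(x,y;t)| ≤ c·h_m²`. -/
theorem thm_kernel_convergence_const
    (L : ℝ) (hL : 0 < L) (σ μ : ℝ) (hσ : 0 < σ)
    (m₀ : ℕ) (hm₀ : ∀ m, m₀ ≤ m → hstep L m * |μ| < σ ^ 2)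
    (t : ℝ) (ht : 0 < t) :
    ∃ c > 0, ∀ m : ℕ, m₀ ≤ m → ∀ x y : ZMod (2 ^ (m + 1)),
      |kernel L (fun _ => σ) (fun _ => μ) m t x y -
          kernel L (fun _ => σ) (fun _ => μ) (m + 1) t (embed m (m + 1) x) (embed m (m + 1) y)|
        ≤ c * hstep L m ^ 2 := by
  have hpi := Real.pi_pos
  have hKpos := Kc_pos (mu := μ) hσ ht hL
  set C2 : ℝ := 27*L^4/(32*t^3*σ^6) with hC2
  have hC2pos : 0 < C2 := by rw [hC2]; positivity
  have hcpos : 0 < (4*t*Kc σ μ t L + C2)/(2*L) := by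
    apply div_pos
    · have h4tK : 0 < 4*t*Kc σ μ t L := mul_pos (by linarith) hKpos
      linarith
    · linarith
  refine ⟨(4*t*Kc σ μ t L + C2)/(2*L), hcpos, ?_⟩
  intro m _ x y
  haveI : NeZero (2^(m+1) : ℕ) := ⟨pow_ne_zero _ (by norm_num)⟩
  have hh : 0 < hstep L m := hstep_pos hL m
  have hKnn : (0:ℝ) ≤ t * hstep L m ^ 2 * Kc σ μ t L :=
    le_of_lt (mul_pos (mul_pos ht (pow_pos hh 2)) hKpos)
  have hnR : (0:ℝ) < ((2^(m+1):ℕ):ℝ) := by positivity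
  have hNh : hstep L m * ((2^(m+1):ℕ):ℝ) = 2*L := hstep_mul_pow L m
  have h1 := kernel_formula L σ μ t hL m x y
  have h2 := kernel_formula L σ μ t hL (m+1) (embed m (m+1) x) (embed m (m+1) y)
  have h2' : ((kernel L (fun _ => σ) (fun _ => μ) (m+1) t (embed m (m+1) x)
        (embed m (m+1) y) : ℝ) : ℂ)
      = (((2*L : ℝ)) : ℂ)⁻¹ * ∑ i ∈ Finset.range (2^(m+1+1)),
          Complex.exp ((t:ℂ) * LamF σ μ (hstep L (m+1)) (2*Real.pi*(i:ℝ)/((2^(m+1+1):ℕ):ℝ)))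
            * eC (2^(m+1)) ((i:ℤ) * ((x.val : ℤ) - (y.val : ℤ))) := by
    rw [h2]
    congr 1
    apply Finset.sum_congr rfl
    intro i _
    rw [embed_phase m x y i]
  have hsplit : ∀ f : ℕ → ℂ, ∑ i ∈ Finset.range (2^(m+1+1)), f i
      = ∑ i ∈ Finset.range (2^(m+1)), f i
        + ∑ i ∈ Finset.range (2^(m+1)), f (2^(m+1)+i) := by
    intro f
    have e2n : (2^(m+1+1):ℕ) = 2^(m+1) + 2^(m+1) := by ring
    rw [e2n, ← Finset.sum_range_add_sum_Ico f (Nat.le_add_right _ _),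
      Finset.sum_Ico_eq_sum_range, Nat.add_sub_cancel]
  have key : |kernel L (fun _ => σ) (fun _ => μ) m t x y -
      kernel L (fun _ => σ) (fun _ => μ) (m + 1) t (embed m (m + 1) x) (embed m (m + 1) y)|
      = ‖((kernel L (fun _ => σ) (fun _ => μ) m t x y -
        kernel L (fun _ => σ) (fun _ => μ) (m + 1) t (embed m (m + 1) x)
          (embed m (m + 1) y) : ℝ) : ℂ)‖ := by
    rw [Complex.norm_real, Real.norm_eq_abs]
  rw [key, Complex.ofReal_sub, h1, h2', ← mul_sub, norm_mul]
  have hcoef : ‖(((2*L:ℝ)):ℂ)⁻¹‖ = (2*L)⁻¹ := by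
    rw [norm_inv, Complex.norm_real, Real.norm_eq_abs, abs_of_pos (by positivity)]
  rw [hcoef, hsplit]
  rw [sub_add_eq_sub_sub, ← Finset.sum_sub_distrib, ← Finset.sum_sub_distrib]
  have hterm : ∀ i ∈ Finset.range (2^(m+1)),
      (Complex.exp ((t:ℂ) * LamF σ μ (hstep L m) (2*Real.pi*(i:ℝ)/((2^(m+1):ℕ):ℝ)))
          * eC (2^(m+1)) ((i:ℤ) * ((x.val : ℤ) - (y.val : ℤ)))
        - Complex.exp ((t:ℂ) * LamF σ μ (hstep L (m+1)) (2*Real.pi*(i:ℝ)/((2^(m+1+1):ℕ):ℝ)))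
          * eC (2^(m+1)) ((i:ℤ) * ((x.val : ℤ) - (y.val : ℤ)))
        - Complex.exp ((t:ℂ) * LamF σ μ (hstep L (m+1))
            (2*Real.pi*((2^(m+1)+i:ℕ):ℝ)/((2^(m+1+1):ℕ):ℝ)))
          * eC (2^(m+1)) (((2^(m+1)+i:ℕ):ℤ) * ((x.val : ℤ) - (y.val : ℤ))))
      = (Complex.exp ((t:ℂ) * LamF σ μ (hstep L m) (2*Real.pi*(i:ℝ)/((2^(m+1):ℕ):ℝ)))
        - Complex.exp ((t:ℂ) * LamF σ μ (hstep L (m+1)) (2*Real.pi*(i:ℝ)/((2^(m+1+1):ℕ):ℝ)))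
        - Complex.exp ((t:ℂ) * LamF σ μ (hstep L (m+1))
            (2*Real.pi*((2^(m+1)+i:ℕ):ℝ)/((2^(m+1+1):ℕ):ℝ))))
          * eC (2^(m+1)) ((i:ℤ) * ((x.val : ℤ) - (y.val : ℤ))) := by
    intro i _
    have hph : eC (2^(m+1)) (((2^(m+1)+i:ℕ):ℤ) * ((x.val : ℤ) - (y.val : ℤ)))
        = eC (2^(m+1)) ((i:ℤ) * ((x.val : ℤ) - (y.val : ℤ))) := by
      apply eC_dvd_congr _ (ne_of_gt hnR)
      refine ⟨(x.val : ℤ) - (y.val : ℤ), ?_⟩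
      push_cast
      ring
    rw [hph]
    ring
  rw [Finset.sum_congr rfl hterm]
  have hperi : ∀ i ∈ Finset.range (2^(m+1)),
      ‖(Complex.exp ((t:ℂ) * LamF σ μ (hstep L m) (2*Real.pi*(i:ℝ)/((2^(m+1):ℕ):ℝ)))
        - Complex.exp ((t:ℂ) * LamF σ μ (hstep L (m+1)) (2*Real.pi*(i:ℝ)/((2^(m+1+1):ℕ):ℝ)))
        - Complex.exp ((t:ℂ) * LamF σ μ (hstep L (m+1))
            (2*Real.pi*((2^(m+1)+i:ℕ):ℝ)/((2^(m+1+1):ℕ):ℝ))))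
          * eC (2^(m+1)) ((i:ℤ) * ((x.val : ℤ) - (y.val : ℤ)))‖
      ≤ t * (hstep L m)^2 * Kc σ μ t L * (invsq i + invsq (2^(m+1) - i))
        + Real.exp (-(4*t*σ^2/(hstep L m)^2)) := by
    intro i hi
    rw [norm_mul, eC_norm, mul_one]
    exact per_i σ μ t L ht hσ hL m i (Finset.mem_range.mp hi)
  have hsum : ‖∑ i ∈ Finset.range (2^(m+1)),
      (Complex.exp ((t:ℂ) * LamF σ μ (hstep L m) (2*Real.pi*(i:ℝ)/((2^(m+1):ℕ):ℝ)))
        - Complex.exp ((t:ℂ) * LamF σ μ (hstep L (m+1)) (2*Real.pi*(i:ℝ)/((2^(m+1+1):ℕ):ℝ)))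
        - Complex.exp ((t:ℂ) * LamF σ μ (hstep L (m+1))
            (2*Real.pi*((2^(m+1)+i:ℕ):ℝ)/((2^(m+1+1):ℕ):ℝ))))
          * eC (2^(m+1)) ((i:ℤ) * ((x.val : ℤ) - (y.val : ℤ)))‖
      ≤ (4*t*Kc σ μ t L + C2) * hstep L m ^ 2 := by
    refine le_trans (norm_sum_le _ _) (le_trans (Finset.sum_le_sum hperi) ?_)
    rw [Finset.sum_add_distrib, Finset.sum_const, Finset.card_range, nsmul_eq_mul]
    have hs1 := sum_invsq_le (2^(m+1))
    have hs2 := sum_invsq_shift (2^(m+1))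
    have hsum12 : ∑ i ∈ Finset.range (2^(m+1)),
        t * (hstep L m)^2 * Kc σ μ t L * (invsq i + invsq (2^(m+1) - i))
        = t * (hstep L m)^2 * Kc σ μ t L
          * (∑ i ∈ Finset.range (2^(m+1)), invsq i
            + ∑ i ∈ Finset.range (2^(m+1)), invsq (2^(m+1) - i)) := by
      rw [← Finset.mul_sum, Finset.sum_add_distrib]
    rw [hsum12]
    have hfirst : t * (hstep L m)^2 * Kc σ μ t L
        * (∑ i ∈ Finset.range (2^(m+1)), invsq i
          + ∑ i ∈ Finset.range (2^(m+1)), invsq (2^(m+1) - i))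
        ≤ t * (hstep L m)^2 * Kc σ μ t L * 4 :=
      mul_le_mul_of_nonneg_left (by linarith) hKnn
    have hE : Real.exp (-(4*t*σ^2/(hstep L m)^2)) ≤ 27*(hstep L m)^6/(64*t^3*σ^6) := by
      have hcube := exp_neg_le_cube (z := 4*t*σ^2/(hstep L m)^2) (by positivity)
      refine le_trans hcube (le_of_eq ?_)
      field_simp
      ring
    have hn2L : ((2^(m+1):ℕ):ℝ) = 2*L/(hstep L m) := by
      rw [eq_div_iff hh.ne']
      linarith [hNh]
    have hh3 : (hstep L m)^3 ≤ L^3 := pow_le_pow_left₀ hh.le (hstep_le hL m) 3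
    have htail : ((2^(m+1):ℕ):ℝ) * Real.exp (-(4*t*σ^2/(hstep L m)^2))
        ≤ C2 * hstep L m ^ 2 := by
      calc ((2^(m+1):ℕ):ℝ) * Real.exp (-(4*t*σ^2/(hstep L m)^2))
          ≤ (2*L/(hstep L m)) * (27*(hstep L m)^6/(64*t^3*σ^6)) := by
            rw [hn2L]
            exact mul_le_mul_of_nonneg_left hE (by positivity)
        _ = 27*L*(hstep L m)^5/(32*t^3*σ^6) := by
            field_simp
            ring
        _ ≤ C2 * hstep L m ^ 2 := by
            have hmono : 27*L*(hstep L m)^5 ≤ 27*L^4*(hstep L m)^2 := by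
              nlinarith [mul_le_mul_of_nonneg_left hh3
                (by positivity : (0:ℝ) ≤ 27*L*(hstep L m)^2)]
            rw [hC2, div_mul_eq_mul_div, div_le_div_iff₀ (by positivity) (by positivity)]
            nlinarith [mul_le_mul_of_nonneg_right hmono
              (by positivity : (0:ℝ) ≤ 32*t^3*σ^6)]
    calc t * (hstep L m)^2 * Kc σ μ t L
          * (∑ i ∈ Finset.range (2^(m+1)), invsq i
            + ∑ i ∈ Finset.range (2^(m+1)), invsq (2^(m+1) - i))
        + ((2^(m+1):ℕ):ℝ) * Real.exp (-(4*t*σ^2/(hstep L m)^2))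
        ≤ t * (hstep L m)^2 * Kc σ μ t L * 4 + C2 * hstep L m ^ 2 := add_le_add hfirst htail
      _ = (4*t*Kc σ μ t L + C2) * hstep L m ^ 2 := by ring
  calc (2*L)⁻¹ * ‖∑ i ∈ Finset.range (2^(m+1)),
      (Complex.exp ((t:ℂ) * LamF σ μ (hstep L m) (2*Real.pi*(i:ℝ)/((2^(m+1):ℕ):ℝ)))
        - Complex.exp ((t:ℂ) * LamF σ μ (hstep L (m+1)) (2*Real.pi*(i:ℝ)/((2^(m+1+1):ℕ):ℝ)))
        - Complex.exp ((t:ℂ) * LamF σ μ (hstep L (m+1))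
            (2*Real.pi*((2^(m+1)+i:ℕ):ℝ)/((2^(m+1+1):ℕ):ℝ))))
          * eC (2^(m+1)) ((i:ℤ) * ((x.val : ℤ) - (y.val : ℤ)))‖
      ≤ (2*L)⁻¹ * ((4*t*Kc σ μ t L + C2) * hstep L m ^ 2) :=
        mul_le_mul_of_nonneg_left hsum (by positivity)
    _ = (4*t*Kc σ μ t L + C2)/(2*L) * hstep L m ^ 2 := by ring
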